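/- Let f : ℝᵐ → (0, ∞) be continuous and integrable on boxes, and for ξ₁ < ξ₂ define s(ξ₁,ξ₂) = ∫_{[ξ₁,ξ₂]ᵐ} f(h) dh. Then ∂(ln s)/∂ξ₂ = Σ_{j=1}^{m} pⱼ(ξ₂), where pⱼ(ξ₂) is the value at hⱼ = ξ₂ of the j-th marginal density of the probability distribution with density f/s on the box [ξ₁,ξ₂]ᵐ, i.e., pⱼ(ξ₂) = ∫_{[ξ₁,ξ₂]^{m−1}} f(h₁,…,h_{j−1}, ξ₂, h_{j+1},…,h_m) dh_{−j} / s. -/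

import Mathlib

open Real MeasureTheory
open Set

/-- Normalizer of the restriction of f to the box [ξ₁, ξ₂]ᵐ. -/
noncomputable def boxNormalizer {m : ℕ} (f : (Fin m → ℝ) → ℝ) (ξ₁ ξ₂ : ℝ) : ℝ :=
  ∫ h in Set.univ.pi fun _ : Fin m => Set.Icc ξ₁ ξ₂, f h

/-- The j-th marginal density of f/s on the box [ξ₁, ξ₂]ᵐ, evaluated at the
upper endpoint hⱼ = ξ₂: integrate f over the remaining m−1 coordinates and
divide by the normalizer. -/
noncomputable def marginalAtUpper {m : ℕ} (f : (Fin m → ℝ) → ℝ) (ξ₁ ξ₂ : ℝ)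
    (j : Fin m) : ℝ :=
  (∫ g : { i : Fin m // i ≠ j } → ℝ in
      Set.univ.pi fun _ : { i : Fin m // i ≠ j } => Set.Icc ξ₁ ξ₂,
      f (fun i => if hij : i = j then ξ₂ else g ⟨i, hij⟩)) /
    boxNormalizer f ξ₁ ξ₂

noncomputable section

variable {m : ℕ}

def upd (j : Fin m) (u : ℝ) (g : {i : Fin m // i ≠ j} → ℝ) : Fin m → ℝ :=
  fun i => if hij : i = j then u else g ⟨i, hij⟩

lemma continuous_upd (j : Fin m) :
    Continuous fun p : ℝ × ({i : Fin m // i ≠ j} → ℝ) => upd j p.1 p.2 := by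
  apply continuous_pi
  intro i
  unfold upd
  by_cases h : i = j <;> simp only [h, dif_pos, dif_neg, not_false_iff]
  · exact continuous_fst
  · exact (continuous_apply _).comp continuous_snd

lemma cont_param (f : (Fin m → ℝ) → ℝ) (hf : Continuous f) (j : Fin m)
    (B : Set ({i : Fin m // i ≠ j} → ℝ)) (hBme : MeasurableSet B) (hBc : IsCompact B) :
    Continuous fun u => ∫ g in B, f (upd j u g) := by
  rw [continuous_iff_continuousAt]
  intro u₀
  have hIcc : Set.Icc (u₀ - 1) (u₀ + 1) ∈ nhds u₀ := Icc_mem_nhds (by linarith) (by linarith)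
  apply ContinuousWithinAt.continuousAt _ hIcc
  apply ContinuousOn.continuousWithinAt _ (by simp : u₀ ∈ Set.Icc (u₀-1) (u₀+1))
  rw [continuousOn_iff_continuous_restrict]
  obtain ⟨C, hC⟩ := ((isCompact_Icc (a := u₀ - 1) (b := u₀ + 1)).prod hBc).exists_bound_of_continuousOn
    (hf.comp (continuous_upd j)).continuousOn
  apply continuous_of_dominated (bound := fun _ => C)
  · intro x
    exact ((hf.comp ((continuous_upd j).comp
      (Continuous.prodMk_right (x:ℝ)))).aestronglyMeasurable).restrict
  · intro x
    filter_upwards [ae_restrict_mem hBme] with g hg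
    exact hC (x, g) ⟨x.2, hg⟩
  · exact (integrableOn_const hBc.measure_lt_top.ne)
  · filter_upwards [] with g
    exact hf.comp ((continuous_upd j).comp (continuous_subtype_val.prodMk continuous_const))


lemma integral_pi_unique {ι : Type*} [u1 : Unique ι] [ft : Fintype ι]
    (H : (ι → ℝ) → ℝ) (s : Set ℝ) :
    ∫ x in Set.univ.pi (fun _ : ι => s), H x = ∫ u in s, H (fun _ => u) := by
  have hft : ft = Unique.fintype := Subsingleton.elim _ _
  subst hft
  have h := ((volume_preserving_funUnique ι ℝ).symm _).setIntegral_preimage_emb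
      (MeasurableEquiv.funUnique ι ℝ).symm.measurableEmbedding H (Set.univ.pi fun _ : ι => s)
  have hpre : (MeasurableEquiv.funUnique ι ℝ).symm ⁻¹' (Set.univ.pi fun _ : ι => s) = s := by
    ext u
    simp [Set.mem_univ_pi]
  have happ : ∀ u : ℝ, (MeasurableEquiv.funUnique ι ℝ).symm u = fun _ => u := fun u => rfl
  rw [hpre] at h
  rw [← h]
  simp only [happ]

lemma pi_vol_congr {ι : Type*} (ft1 ft2 : Fintype ι) :
    (@volume _ (@MeasureSpace.pi ι ft1 (fun _ => ℝ) (fun _ => inferInstance))) =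
    (@volume _ (@MeasureSpace.pi ι ft2 (fun _ => ℝ) (fun _ => inferInstance))) := by
  cases Subsingleton.elim ft1 ft2; rfl

lemma box_fubini (f : (Fin m → ℝ) → ℝ) (hf : Continuous f) (j : Fin m) (a : ℝ) (v : Fin m → ℝ) :
    ∫ x in Set.univ.pi (fun i => Set.Icc a (v i)), f x
    = ∫ u in Set.Icc a (v j), ∫ g : {i : Fin m // i ≠ j} → ℝ in
        Set.univ.pi (fun i : {i : Fin m // i ≠ j} => Set.Icc a (v i.1)), f (upd j u g) := by
  classical
  set e := MeasurableEquiv.piEquivPiSubtypeProd (fun _ : Fin m => ℝ) (fun i => i = j) with he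
  have hmp := volume_preserving_piEquivPiSubtypeProd (fun _ : Fin m => ℝ) (fun i => i = j)
  set S : Set ({i : Fin m // i = j} → ℝ) := Set.univ.pi fun _ => Set.Icc a (v j) with hS
  set T : Set ({i : Fin m // ¬ i = j} → ℝ) :=
    Set.univ.pi fun i => Set.Icc a (v i.1) with hT
  have hesymm : ∀ z : ({i : Fin m // i = j} → ℝ) × ({i : Fin m // ¬ i = j} → ℝ),
      e.symm z = fun i => if h : i = j then z.1 ⟨i, h⟩ else z.2 ⟨i, h⟩ := fun z => rfl
  have hpre : e.symm ⁻¹' (Set.univ.pi fun i => Set.Icc a (v i)) = S ×ˢ T := by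
    ext z
    simp only [Set.mem_preimage, Set.mem_univ_pi, Set.mem_prod, hesymm, hS, hT]
    constructor
    · intro h
      refine ⟨fun i => ?_, fun i => ?_⟩
      · rcases i with ⟨i, rfl⟩
        have := h i
        rwa [dif_pos rfl] at this
      · have := h i.1
        rw [dif_neg i.2] at this
        exact this
    · rintro ⟨h1, h2⟩ i
      by_cases h : i = j
      · rw [dif_pos h]; subst h; exact h1 ⟨i, rfl⟩
      · rw [dif_neg h]; exact h2 ⟨i, h⟩
  have h1 := (hmp.symm e).setIntegral_preimage_emb e.symm.measurableEmbedding f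
    (Set.univ.pi fun i => Set.Icc a (v i))
  rw [hpre] at h1
  rw [← h1, Measure.volume_eq_prod, setIntegral_prod]
  · rw [hS]
    rw [pi_vol_congr (Subtype.fintype fun i => i = j) (Fintype.subtypeEq j)]
    rw [integral_pi_unique (fun x => ∫ y in T, f (e.symm (x, y)))]
    apply setIntegral_congr_fun measurableSet_Icc
    intro u _
    apply setIntegral_congr_fun (MeasurableSet.univ_pi fun _ => measurableSet_Icc)
    intro g _
    rfl
  · apply ContinuousOn.integrableOn_compact
    · exact (isCompact_univ_pi fun _ => isCompact_Icc).prod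
        (isCompact_univ_pi fun _ => isCompact_Icc)
    · refine Continuous.continuousOn (hf.comp ?_)
      apply continuous_pi
      intro i
      simp only [hesymm]
      by_cases h : i = j <;> simp only [h, dif_pos, dif_neg, not_false_iff]
      · exact (continuous_apply _).comp continuous_fst
      · exact (continuous_apply _).comp continuous_snd

open intervalIntegral in
lemma hasDerivAt_param (G : ℝ → ℝ → ℝ) (x₀ c : ℝ)
    (hii : ∀ t, |t - x₀| ≤ 1 → IntervalIntegrable (G t) volume x₀ t)
    (hest : ∀ ε > (0:ℝ), ∃ δ > (0:ℝ), ∀ t u, |t - x₀| < δ → |u - x₀| < δ →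
      |G t u - c| ≤ ε) :
    HasDerivAt (fun t => ∫ u in x₀..t, G t u) c x₀ := by
  rw [hasDerivAt_iff_isLittleO]
  rw [Asymptotics.isLittleO_iff]
  intro ε hε
  obtain ⟨δ, hδ, hb⟩ := hest ε hε
  have hδ1 : 0 < min δ 1 := lt_min hδ one_pos
  have hmem : Set.Ioo (x₀ - min δ 1) (x₀ + min δ 1) ∈ nhds x₀ :=
    Ioo_mem_nhds (by linarith) (by linarith)
  filter_upwards [hmem] with t ht
  have htd : |t - x₀| < min δ 1 := by
    rw [abs_lt]; constructor <;> [linarith [ht.1]; linarith [ht.2]]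
  have ht1 : |t - x₀| ≤ 1 := le_trans htd.le (min_le_right _ _)
  have htδ : |t - x₀| < δ := lt_of_lt_of_le htd (min_le_left _ _)
  have hint : IntervalIntegrable (G t) volume x₀ t := hii t ht1
  have hsub : ((∫ u in x₀..t, G t u) - ∫ u in x₀..x₀, G x₀ u) - (t - x₀) • c
      = ∫ u in x₀..t, (G t u - c) := by
    rw [intervalIntegral.integral_sub hint intervalIntegrable_const,
      intervalIntegral.integral_const, intervalIntegral.integral_same]
    simp [smul_eq_mul]
  rw [hsub]
  have hbd : ∀ u ∈ Set.uIoc x₀ t, ‖G t u - c‖ ≤ ε := by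
    intro u hu
    apply hb t u htδ
    rcases le_total x₀ t with h | h
    · rw [Set.uIoc_of_le h] at hu
      rw [abs_lt]
      have := hu.1; have := hu.2
      constructor <;> [linarith; nlinarith [abs_lt.1 htδ]]
    · rw [Set.uIoc_of_ge h] at hu
      have := hu.1; have := hu.2
      rw [abs_lt]
      constructor
      · have h2 := abs_lt.1 htδ; linarith [h2.1]
      · linarith
  calc ‖∫ u in x₀..t, (G t u - c)‖ ≤ ε * |t - x₀| :=
        intervalIntegral.norm_integral_le_of_norm_le_const hbd
    _ = ε * ‖t - x₀‖ := by rw [Real.norm_eq_abs]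

def Bset (ξ₁ ξ₂ : ℝ) (j : Fin m) (t : ℝ) : Set ({i : Fin m // i ≠ j} → ℝ) :=
  Set.univ.pi fun i => Set.Icc ξ₁ (if (i.1 : ℕ) < (j : ℕ) then t else ξ₂)

def Gfun (f : (Fin m → ℝ) → ℝ) (ξ₁ ξ₂ : ℝ) (j : Fin m) (t u : ℝ) : ℝ :=
  ∫ g in Bset ξ₁ ξ₂ j t, f (upd j u g)

def Nval (f : (Fin m → ℝ) → ℝ) (ξ₁ ξ₂ : ℝ) (j : Fin m) : ℝ :=
  ∫ g : {i : Fin m // i ≠ j} → ℝ in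
    Set.univ.pi fun _ : {i : Fin m // i ≠ j} => Set.Icc ξ₁ ξ₂, f (upd j ξ₂ g)

lemma Bset_meas (ξ₁ ξ₂ : ℝ) (j : Fin m) (t : ℝ) : MeasurableSet (Bset ξ₁ ξ₂ j t) :=
  MeasurableSet.univ_pi fun _ => measurableSet_Icc

lemma Bset_compact (ξ₁ ξ₂ : ℝ) (j : Fin m) (t : ℝ) : IsCompact (Bset ξ₁ ξ₂ j t) :=
  isCompact_univ_pi fun _ => isCompact_Icc

lemma Bset_at (ξ₁ ξ₂ : ℝ) (j : Fin m) :
    Bset ξ₁ ξ₂ j ξ₂ = Set.univ.pi fun _ : {i : Fin m // i ≠ j} => Set.Icc ξ₁ ξ₂ := by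
  simp [Bset]

def Vfun (ξ₁ ξ₂ : ℝ) (j : Fin m) (t : ℝ) : ℝ :=
  ∏ i : {i : Fin m // i ≠ j}, max ((if (i.1 : ℕ) < (j : ℕ) then t else ξ₂) - ξ₁) 0

lemma Vfun_cont (ξ₁ ξ₂ : ℝ) (j : Fin m) : Continuous (Vfun ξ₁ ξ₂ j) := by
  apply continuous_finset_prod
  intro i _
  by_cases h : (i.1 : ℕ) < (j : ℕ) <;> simp only [h, if_true, if_false]
  · exact (continuous_id.sub continuous_const).max continuous_const
  · exact continuous_const

lemma Bset_vol (ξ₁ ξ₂ : ℝ) (j : Fin m) (t : ℝ) :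
    (volume (Bset ξ₁ ξ₂ j t)).toReal = Vfun ξ₁ ξ₂ j t := by
  rw [Bset, volume_pi_pi, ENNReal.toReal_prod, Vfun]
  congr 1
  funext i
  rw [Real.volume_Icc, ENNReal.toReal_ofReal']

lemma Bset_mono (ξ₁ ξ₂ : ℝ) (j : Fin m) {s t : ℝ} (h : s ≤ t) :
    Bset ξ₁ ξ₂ j s ⊆ Bset ξ₁ ξ₂ j t := by
  apply Set.pi_mono
  intro i _
  apply Set.Icc_subset_Icc le_rfl
  by_cases hc : (i.1 : ℕ) < (j : ℕ) <;> simp [hc]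
  exact h

lemma G_estimate (f : (Fin m → ℝ) → ℝ) (hf : Continuous f) (ξ₁ ξ₂ : ℝ) (hξ : ξ₁ < ξ₂)
    (j : Fin m) :
    ∀ ε > (0:ℝ), ∃ δ > (0:ℝ), ∀ t u, |t - ξ₂| < δ → |u - ξ₂| < δ →
      |Gfun f ξ₁ ξ₂ j t u - Nval f ξ₁ ξ₂ j| ≤ ε := by
  intro ε hε
  -- compact box and bounds
  set K : Set (Fin m → ℝ) := Set.univ.pi fun _ : Fin m => Set.Icc (ξ₁ - 1) (ξ₂ + 1) with hK
  have hKc : IsCompact K := isCompact_univ_pi fun _ => isCompact_Icc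
  obtain ⟨M, hM⟩ := hKc.exists_bound_of_continuousOn hf.continuousOn
  set M' : ℝ := max M 0 with hM'
  have hM'0 : 0 ≤ M' := le_max_right _ _
  have hMle : ∀ x ∈ K, |f x| ≤ M' := fun x hx => le_trans (hM x hx) (le_max_left _ _)
  -- volume bound
  set C₀ : ℝ := Vfun ξ₁ ξ₂ j (ξ₂ + 1) with hC₀
  have hC₀0 : 0 ≤ C₀ := Finset.prod_nonneg fun i _ => le_max_right _ _
  -- uniform continuity
  have huc := Metric.uniformContinuousOn_iff.1
    (hKc.uniformContinuousOn_of_continuous hf.continuousOn)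
  obtain ⟨δ₁, hδ₁, hδ₁'⟩ := huc (ε / (2 * (C₀ + 1))) (by positivity)
  -- continuity of the volume function
  obtain ⟨δ₂, hδ₂, hδ₂'⟩ := Metric.continuous_iff.1 (Vfun_cont ξ₁ ξ₂ j) ξ₂
    (ε / (2 * (M' + 1))) (by positivity)
  refine ⟨min (min δ₁ δ₂) (min 1 (ξ₂ - ξ₁)), lt_min (lt_min hδ₁ hδ₂) (lt_min one_pos (by linarith)), ?_⟩
  intro t u ht hu
  have htδ₁ : |t - ξ₂| < δ₁ := lt_of_lt_of_le ht (le_trans (min_le_left _ _) (min_le_left _ _))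
  have huδ₁ : |u - ξ₂| < δ₁ := lt_of_lt_of_le hu (le_trans (min_le_left _ _) (min_le_left _ _))
  have htδ₂ : |t - ξ₂| < δ₂ := lt_of_lt_of_le ht (le_trans (min_le_left _ _) (min_le_right _ _))
  have ht1 : |t - ξ₂| ≤ 1 := le_trans ht.le (le_trans (min_le_right _ _) (min_le_left _ _))
  have hu1 : |u - ξ₂| ≤ 1 := le_trans hu.le (le_trans (min_le_right _ _) (min_le_left _ _))
  have htξ : ξ₁ < t := by
    have := lt_of_lt_of_le ht (le_trans (min_le_right _ _) (min_le_right _ _))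
    have := abs_lt.1 this
    linarith [this.1]
  have ht2 : t ≤ ξ₂ + 1 := by have := abs_le.1 ht1; linarith [this.2]
  have hu2 : ξ₂ - 1 ≤ u ∧ u ≤ ξ₂ + 1 := by have := abs_le.1 hu1; constructor <;> linarith
  -- memberships
  have hmemK : ∀ w : ℝ, ξ₂ - 1 ≤ w → w ≤ ξ₂ + 1 →
      ∀ g ∈ Bset ξ₁ ξ₂ j t, upd j w g ∈ K := by
    intro w hw1 hw2 g hg
    rw [hK, Set.mem_univ_pi]
    intro i
    unfold upd
    by_cases h : i = j
    · rw [dif_pos h]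
      exact ⟨by linarith, hw2⟩
    · rw [dif_neg h]
      have := hg ⟨i, h⟩ trivial
      simp only [Set.mem_Icc] at this ⊢
      refine ⟨by linarith [this.1], ?_⟩
      rcases le_or_gt ((⟨i, h⟩ : {i : Fin m // i ≠ j}).1.1 : ℕ) (j : ℕ) with hc | hc
      · by_cases hlt : ((⟨i, h⟩ : {i : Fin m // i ≠ j}).1.1 : ℕ) < (j : ℕ)
        · rw [if_pos hlt] at this; linarith [this.2]
        · rw [if_neg hlt] at this; linarith [this.2]
      · by_cases hlt : ((⟨i, h⟩ : {i : Fin m // i ≠ j}).1.1 : ℕ) < (j : ℕ)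
        · rw [if_pos hlt] at this; linarith [this.2]
        · rw [if_neg hlt] at this; linarith [this.2]
  -- integrability on Bset
  have hint : ∀ w : ℝ, IntegrableOn (fun g => f (upd j w g)) (Bset ξ₁ ξ₂ j t) volume := by
    intro w
    exact ContinuousOn.integrableOn_compact (Bset_compact ξ₁ ξ₂ j t)
      ((hf.comp ((continuous_upd j).comp (continuous_const.prodMk continuous_id))).continuousOn)
  -- part 1
  set W : ℝ → ℝ := fun s => ∫ g in Bset ξ₁ ξ₂ j s, f (upd j ξ₂ g) with hW
  have hvol_le : (volume (Bset ξ₁ ξ₂ j t)).toReal ≤ C₀ := by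
    rw [hC₀, ← Bset_vol]
    exact ENNReal.toReal_mono (Bset_compact ξ₁ ξ₂ j (ξ₂ + 1)).measure_lt_top.ne
      (measure_mono (Bset_mono ξ₁ ξ₂ j ht2))
  have hpart1 : |Gfun f ξ₁ ξ₂ j t u - W t| ≤ ε / 2 := by
    have heq : Gfun f ξ₁ ξ₂ j t u - W t
        = ∫ g in Bset ξ₁ ξ₂ j t, (f (upd j u g) - f (upd j ξ₂ g)) := by
      rw [Gfun, hW, ← integral_sub (hint u) (hint ξ₂)]
    rw [heq]
    have hb : ∀ g ∈ Bset ξ₁ ξ₂ j t, ‖f (upd j u g) - f (upd j ξ₂ g)‖ ≤ ε / (2 * (C₀ + 1)) := by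
      intro g hg
      have h1 : upd j u g ∈ K := hmemK u hu2.1 hu2.2 g hg
      have h2 : upd j ξ₂ g ∈ K := hmemK ξ₂ (by linarith) (by linarith) g hg
      have hd : dist (upd j u g) (upd j ξ₂ g) < δ₁ := by
        rw [dist_pi_lt_iff hδ₁]
        intro i
        unfold upd
        by_cases h : i = j
        · rw [dif_pos h, dif_pos h, Real.dist_eq]
          exact huδ₁
        · rw [dif_neg h, dif_neg h, dist_self]
          exact hδ₁
      have := hδ₁' _ h1 _ h2 hd
      rw [Real.dist_eq] at this
      exact this.le
    calc ‖∫ g in Bset ξ₁ ξ₂ j t, (f (upd j u g) - f (upd j ξ₂ g))‖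
        ≤ (ε / (2 * (C₀ + 1))) * (volume (Bset ξ₁ ξ₂ j t)).toReal :=
          norm_setIntegral_le_of_norm_le_const (Bset_compact ξ₁ ξ₂ j t).measure_lt_top hb
      _ ≤ (ε / (2 * (C₀ + 1))) * C₀ := by
          apply mul_le_mul_of_nonneg_left hvol_le (by positivity)
      _ ≤ ε / 2 := by
          rw [div_mul_eq_mul_div, div_le_div_iff₀ (by positivity) (by norm_num)]
          nlinarith
  -- part 2
  have hWdiff : |W t - W ξ₂| ≤ M' * |Vfun ξ₁ ξ₂ j t - Vfun ξ₁ ξ₂ j ξ₂| := by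
    have key : ∀ s₁ s₂ : ℝ, s₁ ≤ s₂ → ξ₁ < s₁ → s₂ ≤ ξ₂ + 1 →
        |W s₂ - W s₁| ≤ M' * (Vfun ξ₁ ξ₂ j s₂ - Vfun ξ₁ ξ₂ j s₁) := by
      intro s₁ s₂ hs hs1 hs2
      have hsub : Bset ξ₁ ξ₂ j s₁ ⊆ Bset ξ₁ ξ₂ j s₂ := Bset_mono ξ₁ ξ₂ j hs
      have hint2 : IntegrableOn (fun g => f (upd j ξ₂ g)) (Bset ξ₁ ξ₂ j s₂) volume :=
        ContinuousOn.integrableOn_compact (Bset_compact ξ₁ ξ₂ j s₂)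
          ((hf.comp ((continuous_upd j).comp
            (continuous_const.prodMk continuous_id))).continuousOn)
      have hdiff : W s₂ - W s₁ = ∫ g in Bset ξ₁ ξ₂ j s₂ \ Bset ξ₁ ξ₂ j s₁, f (upd j ξ₂ g) :=
        (integral_diff (Bset_meas ξ₁ ξ₂ j s₁) hint2 hsub).symm
      rw [hdiff]
      have hbd : ∀ g ∈ Bset ξ₁ ξ₂ j s₂ \ Bset ξ₁ ξ₂ j s₁, ‖f (upd j ξ₂ g)‖ ≤ M' := by
        intro g hg
        apply hMle
        rw [hK, Set.mem_univ_pi]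
        intro i
        unfold upd
        by_cases h : i = j
        · rw [dif_pos h]; exact ⟨by linarith, by linarith⟩
        · rw [dif_neg h]
          have := hg.1 ⟨i, h⟩ trivial
          simp only [Set.mem_Icc] at this ⊢
          by_cases hlt : ((i : Fin m) : ℕ) < (j : ℕ)
          · rw [if_pos hlt] at this; exact ⟨by linarith [this.1], by linarith [this.2]⟩
          · rw [if_neg hlt] at this; exact ⟨by linarith [this.1], by linarith [this.2]⟩
      have hvol : (volume (Bset ξ₁ ξ₂ j s₂ \ Bset ξ₁ ξ₂ j s₁)).toReal
          = Vfun ξ₁ ξ₂ j s₂ - Vfun ξ₁ ξ₂ j s₁ := by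
        rw [measure_diff hsub (Bset_meas ξ₁ ξ₂ j s₁).nullMeasurableSet
          (Bset_compact ξ₁ ξ₂ j s₁).measure_lt_top.ne,
          ENNReal.toReal_sub_of_le (measure_mono hsub)
            (Bset_compact ξ₁ ξ₂ j s₂).measure_lt_top.ne, Bset_vol, Bset_vol]
      calc ‖∫ g in Bset ξ₁ ξ₂ j s₂ \ Bset ξ₁ ξ₂ j s₁, f (upd j ξ₂ g)‖
          ≤ M' * (volume (Bset ξ₁ ξ₂ j s₂ \ Bset ξ₁ ξ₂ j s₁)).toReal :=
            norm_setIntegral_le_of_norm_le_const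
              (lt_of_le_of_lt (measure_mono Set.diff_subset)
                (Bset_compact ξ₁ ξ₂ j s₂).measure_lt_top) hbd
        _ = M' * (Vfun ξ₁ ξ₂ j s₂ - Vfun ξ₁ ξ₂ j s₁) := by rw [hvol]
    rcases le_total t ξ₂ with h | h
    · have := key t ξ₂ h htξ (by linarith)
      rw [abs_sub_comm] at this
      apply le_trans this
      apply mul_le_mul_of_nonneg_left _ hM'0
      rw [abs_sub_comm]
      exact le_abs_self _
    · have := key ξ₂ t h hξ ht2
      apply le_trans this
      apply mul_le_mul_of_nonneg_left _ hM'0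
      exact le_abs_self _
  have hpart2 : |W t - Nval f ξ₁ ξ₂ j| ≤ ε / 2 := by
    have hWN : W ξ₂ = Nval f ξ₁ ξ₂ j := by rw [Nval, ← Bset_at ξ₁ ξ₂ j]
    rw [← hWN]
    apply le_trans hWdiff
    have := hδ₂' t (by rw [Real.dist_eq]; exact htδ₂)
    rw [Real.dist_eq] at this
    calc M' * |Vfun ξ₁ ξ₂ j t - Vfun ξ₁ ξ₂ j ξ₂| ≤ M' * (ε / (2 * (M' + 1))) :=
          mul_le_mul_of_nonneg_left this.le hM'0
      _ ≤ ε / 2 := by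
          rw [mul_comm, div_mul_eq_mul_div, div_le_div_iff₀ (by positivity) (by norm_num)]
          nlinarith
  calc |Gfun f ξ₁ ξ₂ j t u - Nval f ξ₁ ξ₂ j|
      ≤ |Gfun f ξ₁ ξ₂ j t u - W t| + |W t - Nval f ξ₁ ξ₂ j| := abs_sub_le _ _ _
    _ ≤ ε / 2 + ε / 2 := add_le_add hpart1 hpart2
    _ = ε := by ring

def boxNormalizer' (f : (Fin m → ℝ) → ℝ) (ξ₁ ξ₂ : ℝ) : ℝ :=
  ∫ h in Set.univ.pi fun _ : Fin m => Set.Icc ξ₁ ξ₂, f h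

lemma telescope (f : (Fin m → ℝ) → ℝ) (hf : Continuous f) (ξ₁ ξ₂ : ℝ) (hξ : ξ₁ ≤ ξ₂)
    {t : ℝ} (ht1 : ξ₁ < t) :
    boxNormalizer' f ξ₁ t = boxNormalizer' f ξ₁ ξ₂
      + ∑ j : Fin m, ∫ u in ξ₂..t, Gfun f ξ₁ ξ₂ j t u := by
  set q : ℕ → ℝ := fun n => ∫ x in Set.univ.pi
    (fun i : Fin m => Set.Icc ξ₁ (if (i : ℕ) < n then t else ξ₂)), f x with hq
  have hq0 : q 0 = boxNormalizer' f ξ₁ ξ₂ := by simp [hq, boxNormalizer']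
  have hqm : q m = boxNormalizer' f ξ₁ t := by simp [hq, boxNormalizer', Fin.is_lt]
  have hstep : ∀ j : Fin m, q ((j : ℕ) + 1) - q (j : ℕ) = ∫ u in ξ₂..t, Gfun f ξ₁ ξ₂ j t u := by
    intro j
    have h1 := box_fubini f hf j ξ₁ (fun i => if (i : ℕ) < (j : ℕ) + 1 then t else ξ₂)
    have h2 := box_fubini f hf j ξ₁ (fun i => if (i : ℕ) < (j : ℕ) then t else ξ₂)
    rw [if_pos (Nat.lt_succ_self _)] at h1
    rw [if_neg (lt_irrefl _)] at h2
    have hset : (fun i : {i : Fin m // i ≠ j} =>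
          Set.Icc ξ₁ (if ((i.1 : Fin m) : ℕ) < (j : ℕ) + 1 then t else ξ₂))
        = fun i : {i : Fin m // i ≠ j} =>
          Set.Icc ξ₁ (if ((i.1 : Fin m) : ℕ) < (j : ℕ) then t else ξ₂) := by
      funext i
      have hiff : (((i.1 : Fin m) : ℕ) < (j : ℕ) + 1) = (((i.1 : Fin m) : ℕ) < (j : ℕ)) := by
        apply propext
        constructor
        · intro h
          rcases Nat.lt_succ_iff_lt_or_eq.1 h with h | h
          · exact h
          · exact absurd (Fin.ext h) i.2
        · exact Nat.lt_succ_of_lt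
      exact congrArg (Set.Icc ξ₁) (if_congr (iff_of_eq hiff) rfl rfl)
    rw [hset] at h1
    have hHc : Continuous fun u => ∫ g : {i : Fin m // i ≠ j} → ℝ in
        Set.univ.pi (fun i : {i : Fin m // i ≠ j} =>
          Set.Icc ξ₁ (if ((i.1 : Fin m) : ℕ) < (j : ℕ) then t else ξ₂)), f (upd j u g) :=
      cont_param f hf j _ (MeasurableSet.univ_pi fun _ => measurableSet_Icc)
        (isCompact_univ_pi fun _ => isCompact_Icc)
    show q ((j : ℕ) + 1) - q (j : ℕ) = ∫ u in ξ₂..t, ∫ g : {i : Fin m // i ≠ j} → ℝ in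
      Set.univ.pi (fun i : {i : Fin m // i ≠ j} =>
        Set.Icc ξ₁ (if ((i.1 : Fin m) : ℕ) < (j : ℕ) then t else ξ₂)), f (upd j u g)
    rw [hq]
    simp only []
    rw [h1, h2, integral_Icc_eq_integral_Ioc, integral_Icc_eq_integral_Ioc,
      ← intervalIntegral.integral_of_le ht1.le, ← intervalIntegral.integral_of_le hξ,
      intervalIntegral.integral_interval_sub_left (hHc.intervalIntegrable _ _)
        (hHc.intervalIntegrable _ _)]
  have hsum : ∑ j : Fin m, (q ((j : ℕ) + 1) - q (j : ℕ)) = q m - q 0 := by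
    rw [Fin.sum_univ_eq_sum_range (fun k => q (k + 1) - q k) m]
    exact Finset.sum_range_sub q m
  have : boxNormalizer' f ξ₁ t = q 0 + ∑ j : Fin m, (q ((j : ℕ) + 1) - q (j : ℕ)) := by
    rw [hsum, hq0, hqm]; ring
  rw [this, hq0]
  congr 1
  exact Finset.sum_congr rfl fun j _ => hstep j

lemma boxNormalizer_hasDerivAt (f : (Fin m → ℝ) → ℝ) (hf : Continuous f)
    (ξ₁ ξ₂ : ℝ) (hξ : ξ₁ < ξ₂) :
    HasDerivAt (fun t => boxNormalizer' f ξ₁ t) (∑ j, Nval f ξ₁ ξ₂ j) ξ₂ := by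
  have hG : ∀ j : Fin m,
      HasDerivAt (fun t => ∫ u in ξ₂..t, Gfun f ξ₁ ξ₂ j t u) (Nval f ξ₁ ξ₂ j) ξ₂ := by
    intro j
    apply hasDerivAt_param
    · intro t _
      exact (cont_param f hf j _ (Bset_meas ξ₁ ξ₂ j t)
        (Bset_compact ξ₁ ξ₂ j t)).intervalIntegrable _ _
    · exact G_estimate f hf ξ₁ ξ₂ hξ j
  have h2 : HasDerivAt (fun t => boxNormalizer' f ξ₁ ξ₂
      + ∑ j : Fin m, ∫ u in ξ₂..t, Gfun f ξ₁ ξ₂ j t u) (∑ j, Nval f ξ₁ ξ₂ j) ξ₂ :=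
    (HasDerivAt.fun_sum fun j _ => hG j).const_add _
  apply h2.congr_of_eventuallyEq
  filter_upwards [Ioo_mem_nhds hξ (lt_add_one ξ₂)] with t ht
  exact telescope f hf ξ₁ ξ₂ hξ.le ht.1

lemma boxNormalizer_pos (f : (Fin m → ℝ) → ℝ) (hf : Continuous f) (hpos : ∀ h, 0 < f h)
    (ξ₁ ξ₂ : ℝ) (hξ : ξ₁ < ξ₂) : 0 < boxNormalizer' f ξ₁ ξ₂ := by
  rw [boxNormalizer']
  have hint : IntegrableOn f (Set.univ.pi fun _ : Fin m => Set.Icc ξ₁ ξ₂) volume :=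
    ContinuousOn.integrableOn_compact (isCompact_univ_pi fun _ => isCompact_Icc)
      hf.continuousOn
  rw [setIntegral_pos_iff_support_of_nonneg_ae
    (Filter.Eventually.of_forall fun x => (hpos x).le) hint]
  have hsupp : Function.support f = Set.univ :=
    Set.eq_univ_iff_forall.2 fun x => (hpos x).ne'
  rw [hsupp, Set.univ_inter, volume_pi_pi]
  simp only [Real.volume_Icc, Finset.prod_const, Finset.card_univ, Fintype.card_fin]
  have : (0 : ENNReal) < ENNReal.ofReal (ξ₂ - ξ₁) := ENNReal.ofReal_pos.2 (by linarith)
  exact ENNReal.pow_pos this m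

end

/-- Leibniz rule for the log normalizer over a cube with a common upper
truncation point: the derivative is the sum of the marginal densities at the
upper endpoint. -/
theorem log_box_normalizer_upper_gradient {m : ℕ}
    (f : (Fin m → ℝ) → ℝ) (hf : Continuous f) (hpos : ∀ h, 0 < f h)
    (hint : ∀ a b : ℝ, IntegrableOn f (Set.univ.pi fun _ : Fin m => Set.Icc a b) volume)
    (ξ₁ ξ₂ : ℝ) (hξ : ξ₁ < ξ₂) :
    HasDerivAt (fun t => Real.log (boxNormalizer f ξ₁ t))
      (∑ j, marginalAtUpper f ξ₁ ξ₂ j) ξ₂ := by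
  have hbox : boxNormalizer f ξ₁ = boxNormalizer' f ξ₁ := rfl
  have hd : HasDerivAt (fun t => boxNormalizer f ξ₁ t) (∑ j, Nval f ξ₁ ξ₂ j) ξ₂ := by
    rw [hbox]; exact boxNormalizer_hasDerivAt f hf ξ₁ ξ₂ hξ
  have hspos : 0 < boxNormalizer f ξ₁ ξ₂ := boxNormalizer_pos f hf hpos ξ₁ ξ₂ hξ
  have hlog := hd.log hspos.ne'
  have hmarg : ∑ j, marginalAtUpper f ξ₁ ξ₂ j
      = (∑ j, Nval f ξ₁ ξ₂ j) / boxNormalizer f ξ₁ ξ₂ := by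
    rw [Finset.sum_div]
    rfl
  rw [hmarg]
  exact hlog
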